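/- The Eckmann–Hilton cube exists: let X be a topological space, x : X, and let p, q : I × I → X be continuous maps that are constantly x on the boundary of the square, i.e., p (0,t) = p (1,t) = p (s,0) = p (s,1) = x and likewise for q, for all s, t ∈ I. Then there exists a continuous map H : I × I × I → X such that H (0, j, k) = H (1, j, k) = p (j, k), H (i, 0, k) = H (i, 1, k) = q (i, k), and H (i, j, 0) = H (i, j, 1) = x, for all i, j, k ∈ I. -/
import Mathlib


open unitInterval

noncomputable section EHcube

private def clampI (t : ℝ) : I := Set.projIcc 0 1 zero_le_one t

private lemma clampI_coe (t : I) : clampI (t : ℝ) = t := Set.projIcc_val zero_le_one t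

private lemma clampI_zero : clampI 0 = 0 := by simpa using clampI_coe 0

private lemma clampI_one : clampI 1 = 1 := by simpa using clampI_coe 1

private lemma continuous_clampI : Continuous clampI := by
  unfold clampI; exact continuous_projIcc

/-- margin of the inner "island" square carrying `p`. -/
private def ehm (i : ℝ) : ℝ := 3/4 * min i (1-i)

/-- distance of `(j,k)` to the boundary of the square. -/
private def ehE (j k : ℝ) : ℝ := min (min j (1-j)) (min k (1-k))

private def ehW1 (i : ℝ) : ℝ := min 1 (3 - 1 / max i (4⁻¹))

private def ehW2 (i k : ℝ) : ℝ := -k / max (min i (1-i)) (4⁻¹)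

private def ehP1 (i j k : ℝ) : ℝ := i + 4/3 * ehE j k * ehW1 i

private def ehP2 (i j k : ℝ) : ℝ := k + 4/3 * ehE j k * ehW2 i k

private def ehQ1 (i j k : ℝ) : ℝ := (j - ehm i) / (1 - 2 * ehm i)

private def ehQ2 (i j k : ℝ) : ℝ := (k - ehm i) / (1 - 2 * ehm i)

private lemma ehm_nonneg {i : ℝ} (h0 : 0 ≤ i) (h1 : i ≤ 1) : 0 ≤ ehm i := by
  unfold ehm
  rcases le_total i (1-i) with h | h
  · rw [min_eq_left h]; linarith
  · rw [min_eq_right h]; linarith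

private lemma ehm_le (i : ℝ) : ehm i ≤ 3/8 := by
  unfold ehm
  rcases le_total i (1-i) with h | h
  · rw [min_eq_left h]; linarith
  · rw [min_eq_right h]; linarith

private lemma ehm_denom_pos (i : ℝ) : 0 < 1 - 2 * ehm i := by
  have := ehm_le i; linarith

private lemma ehE_nonneg {j k : ℝ} (hj0 : 0 ≤ j) (hj1 : j ≤ 1) (hk0 : 0 ≤ k)
    (hk1 : k ≤ 1) : 0 ≤ ehE j k := by
  unfold ehE
  exact le_min (le_min hj0 (by linarith)) (le_min hk0 (by linarith))

private lemma ehE_eq_zero {a b : ℝ} (h : ehE a b = 0) :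
    a = 0 ∨ a = 1 ∨ b = 0 ∨ b = 1 := by
  unfold ehE at h
  rcases min_eq_iff.mp h with ⟨h1, -⟩ | ⟨h1, -⟩ <;>
    rcases min_eq_iff.mp h1 with ⟨h2, -⟩ | ⟨h2, -⟩
  · exact Or.inl h2
  · exact Or.inr (Or.inl (by linarith))
  · exact Or.inr (Or.inr (Or.inl h2))
  · exact Or.inr (Or.inr (Or.inr (by linarith)))

theorem eckmannHilton_cube_exists
    {X : Type*} [TopologicalSpace X] (x : X) (p q : C(I × I, X))
    (hp0 : ∀ t : I, p (0, t) = x) (hp1 : ∀ t : I, p (1, t) = x)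
    (hp0' : ∀ s : I, p (s, 0) = x) (hp1' : ∀ s : I, p (s, 1) = x)
    (hq0 : ∀ t : I, q (0, t) = x) (hq1 : ∀ t : I, q (1, t) = x)
    (hq0' : ∀ s : I, q (s, 0) = x) (hq1' : ∀ s : I, q (s, 1) = x) :
    ∃ H : C(I × I × I, X),
      (∀ j k : I, H (0, j, k) = p (j, k)) ∧
      (∀ j k : I, H (1, j, k) = p (j, k)) ∧
      (∀ i k : I, H (i, 0, k) = q (i, k)) ∧
      (∀ i k : I, H (i, 1, k) = q (i, k)) ∧
      (∀ i j : I, H (i, j, 0) = x) ∧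
      (∀ i j : I, H (i, j, 1) = x) := by
  set F : I × I × I → X := fun z =>
    if ehE (z.2.1 : ℝ) (z.2.2 : ℝ) ≤ ehm (z.1 : ℝ) then
      q (clampI (ehP1 z.1 z.2.1 z.2.2), clampI (ehP2 z.1 z.2.1 z.2.2))
    else
      p (clampI (ehQ1 z.1 z.2.1 z.2.2), clampI (ehQ2 z.1 z.2.1 z.2.2))
    with hF
  -- the matching on the interface `E = m`: both branches are `x`.
  have match_q : ∀ i j k : I, ehE (j : ℝ) (k : ℝ) = ehm (i : ℝ) →
      q (clampI (ehP1 i j k), clampI (ehP2 i j k)) = x := by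
    intro i j k h
    have hi0 : (0:ℝ) ≤ i := i.2.1
    have hi1 : (i:ℝ) ≤ 1 := i.2.2
    rcases le_total (i : ℝ) (1 - (i : ℝ)) with hσ | hσ
    · have hmin : min (i:ℝ) (1 - (i:ℝ)) = (i:ℝ) := min_eq_left hσ
      rcases le_total (i : ℝ) (4⁻¹ : ℝ) with h4 | h4
      · -- i ≤ 1/4 : first coordinate of the frame map is 0
        have hW1 : ehW1 (i : ℝ) = -1 := by
          unfold ehW1
          rw [max_eq_right h4]
          norm_num
        have hP1 : ehP1 i j k = 0 := by
          unfold ehP1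
          rw [h, hW1]
          unfold ehm
          rw [hmin]
          ring
        rw [hP1, clampI_zero]
        exact hq0 _
      · -- 1/4 ≤ i ≤ 1/2 : second coordinate of the frame map is 0
        have hipos : (0:ℝ) < (i:ℝ) := by linarith
        have hP2 : ehP2 i j k = 0 := by
          unfold ehP2 ehW2
          rw [h]
          unfold ehm
          rw [hmin, max_eq_left h4]
          field_simp
          ring
        rw [hP2, clampI_zero]
        exact hq0' _
    · have hmin : min (i:ℝ) (1 - (i:ℝ)) = 1 - (i:ℝ) := min_eq_right hσ
      rcases le_total (4⁻¹ : ℝ) (1 - (i : ℝ)) with h4 | h4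
      · -- 1/2 ≤ i ≤ 3/4 : second coordinate of the frame map is 0
        have hipos : (0:ℝ) < 1 - (i:ℝ) := by linarith
        have hP2 : ehP2 i j k = 0 := by
          unfold ehP2 ehW2
          rw [h]
          unfold ehm
          rw [hmin, max_eq_left h4]
          field_simp
          ring
        rw [hP2, clampI_zero]
        exact hq0' _
      · -- i ≥ 3/4 : first coordinate of the frame map is 1
        have hi4 : (3/4 : ℝ) ≤ (i : ℝ) := by linarith
        have hipos : (0:ℝ) < (i:ℝ) := by linarith
        have hW1 : ehW1 (i : ℝ) = 1 := by
          unfold ehW1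
          rw [max_eq_left (by linarith : (4⁻¹:ℝ) ≤ (i:ℝ))]
          rw [min_eq_left]
          have : 1 / (i:ℝ) ≤ 2 := by
            rw [div_le_iff₀ hipos]; linarith
          linarith
        have hP1 : ehP1 i j k = 1 := by
          unfold ehP1
          rw [h, hW1]
          unfold ehm
          rw [hmin]
          ring
        rw [hP1, clampI_one]
        exact hq1 _
  have match_p : ∀ i j k : I, ehE (j : ℝ) (k : ℝ) = ehm (i : ℝ) →
      p (clampI (ehQ1 i j k), clampI (ehQ2 i j k)) = x := by
    intro i j k h
    have hd := ehm_denom_pos (i : ℝ)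
    unfold ehE at h
    rcases min_eq_iff.mp h with ⟨h2, -⟩ | ⟨h2, -⟩ <;>
      rcases min_eq_iff.mp h2 with ⟨h3, -⟩ | ⟨h3, -⟩
    · have hQ1 : ehQ1 i j k = 0 := by unfold ehQ1; rw [h3]; simp
      rw [hQ1, clampI_zero]; exact hp0 _
    · have hQ1 : ehQ1 i j k = 1 := by
        unfold ehQ1
        rw [div_eq_one_iff_eq hd.ne']
        linarith
      rw [hQ1, clampI_one]; exact hp1 _
    · have hQ2 : ehQ2 i j k = 0 := by unfold ehQ2; rw [h3]; simp
      rw [hQ2, clampI_zero]; exact hp0' _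
    · have hQ2 : ehQ2 i j k = 1 := by
        unfold ehQ2
        rw [div_eq_one_iff_eq hd.ne']
        linarith
      rw [hQ2, clampI_one]; exact hp1' _
  -- continuity
  have c_i : Continuous fun z : I × I × I => (z.1 : ℝ) :=
    continuous_subtype_val.comp continuous_fst
  have c_j : Continuous fun z : I × I × I => (z.2.1 : ℝ) :=
    continuous_subtype_val.comp (continuous_fst.comp continuous_snd)
  have c_k : Continuous fun z : I × I × I => (z.2.2 : ℝ) :=
    continuous_subtype_val.comp (continuous_snd.comp continuous_snd)
  have c_E : Continuous fun z : I × I × I => ehE (z.2.1 : ℝ) (z.2.2 : ℝ) := by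
    unfold ehE
    exact (c_j.min (continuous_const.sub c_j)).min (c_k.min (continuous_const.sub c_k))
  have c_m : Continuous fun z : I × I × I => ehm (z.1 : ℝ) := by
    unfold ehm
    exact continuous_const.mul (c_i.min (continuous_const.sub c_i))
  have c_W1 : Continuous fun z : I × I × I => ehW1 (z.1 : ℝ) := by
    unfold ehW1
    refine continuous_const.min (continuous_const.sub ?_)
    refine continuous_const.div (c_i.max continuous_const) fun z => ?_
    exact (lt_max_iff.mpr (Or.inr (by norm_num))).ne'
  have c_W2 : Continuous fun z : I × I × I => ehW2 (z.1 : ℝ) (z.2.2 : ℝ) := by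
    unfold ehW2
    refine Continuous.div c_k.neg
      ((Continuous.min c_i (continuous_const.sub c_i)).max continuous_const) fun z => ?_
    exact (lt_max_iff.mpr (Or.inr (by norm_num))).ne'
  have c_P1 : Continuous fun z : I × I × I => ehP1 (z.1 : ℝ) (z.2.1 : ℝ) (z.2.2 : ℝ) := by
    unfold ehP1
    exact c_i.add ((continuous_const.mul c_E).mul c_W1)
  have c_P2 : Continuous fun z : I × I × I => ehP2 (z.1 : ℝ) (z.2.1 : ℝ) (z.2.2 : ℝ) := by
    unfold ehP2
    exact c_k.add ((continuous_const.mul c_E).mul c_W2)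
  have c_Q1 : Continuous fun z : I × I × I => ehQ1 (z.1 : ℝ) (z.2.1 : ℝ) (z.2.2 : ℝ) := by
    unfold ehQ1
    exact (c_j.sub c_m).div (continuous_const.sub (continuous_const.mul c_m))
      fun z => (ehm_denom_pos _).ne'
  have c_Q2 : Continuous fun z : I × I × I => ehQ2 (z.1 : ℝ) (z.2.1 : ℝ) (z.2.2 : ℝ) := by
    unfold ehQ2
    exact (c_k.sub c_m).div (continuous_const.sub (continuous_const.mul c_m))
      fun z => (ehm_denom_pos _).ne'
  have hFc : Continuous F := by
    rw [hF]
    refine Continuous.if_le ?_ ?_ c_E c_m ?_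
    · exact q.continuous.comp
        ((continuous_clampI.comp c_P1).prodMk (continuous_clampI.comp c_P2))
    · exact p.continuous.comp
        ((continuous_clampI.comp c_Q1).prodMk (continuous_clampI.comp c_Q2))
    · intro z h
      rw [match_q z.1 z.2.1 z.2.2 h, match_p z.1 z.2.1 z.2.2 h]
  refine ⟨⟨F, hFc⟩, ?_, ?_, ?_, ?_, ?_, ?_⟩
  · -- i = 0 face
    intro j k
    show F (0, j, k) = p (j, k)
    rw [hF]
    have hm0 : ehm ((0:I) : ℝ) = 0 := by
      unfold ehm
      rw [Set.Icc.coe_zero]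
      rw [min_eq_left (by norm_num : (0:ℝ) ≤ 1 - 0)]
      ring
    dsimp only
    rw [hm0]
    split_ifs with hle
    · have hE0 : ehE (j : ℝ) (k : ℝ) = 0 :=
        le_antisymm hle (ehE_nonneg j.2.1 j.2.2 k.2.1 k.2.2)
      have hP1 : ehP1 ((0:I):ℝ) j k = ((0:I) : ℝ) := by unfold ehP1; rw [hE0]; ring
      have hP2 : ehP2 ((0:I):ℝ) j k = (k : ℝ) := by unfold ehP2; rw [hE0]; ring
      rw [hP1, hP2, clampI_coe, clampI_coe, hq0 k]
      rcases ehE_eq_zero hE0 with h | h | h | h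
      · rw [show j = 0 from Subtype.ext (by simpa using h)]; exact (hp0 k).symm
      · rw [show j = 1 from Subtype.ext (by simpa using h)]; exact (hp1 k).symm
      · rw [show k = 0 from Subtype.ext (by simpa using h)]; exact (hp0' j).symm
      · rw [show k = 1 from Subtype.ext (by simpa using h)]; exact (hp1' j).symm
    · have hQ1 : ehQ1 ((0:I):ℝ) j k = (j : ℝ) := by
        unfold ehQ1; rw [hm0]; simp
      have hQ2 : ehQ2 ((0:I):ℝ) j k = (k : ℝ) := by
        unfold ehQ2; rw [hm0]; simp
      rw [hQ1, hQ2, clampI_coe, clampI_coe]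
  · -- i = 1 face
    intro j k
    show F (1, j, k) = p (j, k)
    rw [hF]
    have hm0 : ehm ((1:I) : ℝ) = 0 := by
      unfold ehm
      rw [Set.Icc.coe_one]
      rw [min_eq_right (by norm_num : (1:ℝ) - 1 ≤ 1)]
      ring
    dsimp only
    rw [hm0]
    split_ifs with hle
    · have hE0 : ehE (j : ℝ) (k : ℝ) = 0 :=
        le_antisymm hle (ehE_nonneg j.2.1 j.2.2 k.2.1 k.2.2)
      have hP1 : ehP1 ((1:I):ℝ) j k = ((1:I) : ℝ) := by unfold ehP1; rw [hE0]; ring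
      have hP2 : ehP2 ((1:I):ℝ) j k = (k : ℝ) := by unfold ehP2; rw [hE0]; ring
      rw [hP1, hP2, clampI_coe, clampI_coe, hq1 k]
      rcases ehE_eq_zero hE0 with h | h | h | h
      · rw [show j = 0 from Subtype.ext (by simpa using h)]; exact (hp0 k).symm
      · rw [show j = 1 from Subtype.ext (by simpa using h)]; exact (hp1 k).symm
      · rw [show k = 0 from Subtype.ext (by simpa using h)]; exact (hp0' j).symm
      · rw [show k = 1 from Subtype.ext (by simpa using h)]; exact (hp1' j).symm
    · have hQ1 : ehQ1 ((1:I):ℝ) j k = (j : ℝ) := by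
        unfold ehQ1; rw [hm0]; simp
      have hQ2 : ehQ2 ((1:I):ℝ) j k = (k : ℝ) := by
        unfold ehQ2; rw [hm0]; simp
      rw [hQ1, hQ2, clampI_coe, clampI_coe]
  · -- j = 0 face
    intro i k
    show F (i, 0, k) = q (i, k)
    rw [hF]
    have hE0 : ehE ((0:I) : ℝ) (k : ℝ) = 0 := by
      unfold ehE
      rw [Set.Icc.coe_zero]
      rw [min_eq_left (by norm_num : (0:ℝ) ≤ 1 - 0)]
      rw [min_eq_left (le_min k.2.1 (by linarith [k.2.2]))]
    dsimp only
    rw [hE0, if_pos (ehm_nonneg i.2.1 i.2.2)]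
    have hP1 : ehP1 (i:ℝ) ((0:I):ℝ) (k:ℝ) = (i : ℝ) := by
      unfold ehP1
      rw [show ehE ((0:I):ℝ) (k:ℝ) = 0 from hE0]
      ring
    have hP2 : ehP2 (i:ℝ) ((0:I):ℝ) (k:ℝ) = (k : ℝ) := by
      unfold ehP2
      rw [show ehE ((0:I):ℝ) (k:ℝ) = 0 from hE0]
      ring
    rw [hP1, hP2, clampI_coe, clampI_coe]
  · -- j = 1 face
    intro i k
    show F (i, 1, k) = q (i, k)
    rw [hF]
    have hE0 : ehE ((1:I) : ℝ) (k : ℝ) = 0 := by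
      unfold ehE
      rw [Set.Icc.coe_one]
      rw [min_eq_right (by norm_num : (1:ℝ) - 1 ≤ 1)]
      rw [min_eq_left (le_min (by linarith [k.2.1]) (by linarith [k.2.2]))]
      norm_num
    dsimp only
    rw [hE0, if_pos (ehm_nonneg i.2.1 i.2.2)]
    have hP1 : ehP1 (i:ℝ) ((1:I):ℝ) (k:ℝ) = (i : ℝ) := by
      unfold ehP1
      rw [show ehE ((1:I):ℝ) (k:ℝ) = 0 from hE0]
      ring
    have hP2 : ehP2 (i:ℝ) ((1:I):ℝ) (k:ℝ) = (k : ℝ) := by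
      unfold ehP2
      rw [show ehE ((1:I):ℝ) (k:ℝ) = 0 from hE0]
      ring
    rw [hP1, hP2, clampI_coe, clampI_coe]
  · -- k = 0 face
    intro i j
    show F (i, j, 0) = x
    rw [hF]
    have hE0 : ehE (j : ℝ) ((0:I) : ℝ) = 0 := by
      unfold ehE
      rw [Set.Icc.coe_zero]
      rw [min_eq_left (by norm_num : (0:ℝ) ≤ 1 - 0)]
      rw [min_eq_right (le_min j.2.1 (by linarith [j.2.2]))]
    dsimp only
    rw [hE0, if_pos (ehm_nonneg i.2.1 i.2.2)]
    have hP2 : ehP2 (i:ℝ) (j:ℝ) ((0:I):ℝ) = 0 := by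
      unfold ehP2
      rw [show ehE (j:ℝ) ((0:I):ℝ) = 0 from hE0, Set.Icc.coe_zero]
      ring
    rw [hP2, clampI_zero]
    exact hq0' _
  · -- k = 1 face
    intro i j
    show F (i, j, 1) = x
    rw [hF]
    have hE0 : ehE (j : ℝ) ((1:I) : ℝ) = 0 := by
      unfold ehE
      rw [Set.Icc.coe_one]
      rw [min_eq_right (by norm_num : (1:ℝ) - 1 ≤ 1)]
      rw [min_eq_right (le_min (by linarith [j.2.1]) (by linarith [j.2.2]))]
      norm_num
    dsimp only
    rw [hE0, if_pos (ehm_nonneg i.2.1 i.2.2)]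
    have hP2 : ehP2 (i:ℝ) (j:ℝ) ((1:I):ℝ) = 1 := by
      unfold ehP2
      rw [show ehE (j:ℝ) ((1:I):ℝ) = 0 from hE0, Set.Icc.coe_one]
      ring
    rw [hP2, clampI_one]
    exact hq1' _

end EHcube
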